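/- For every integer l ≥ 1, √(πl)/2 ≤ ∑_{k1 + k2 = l} (l!)^2 / ((2k1)! (2k2)!) ≤ (√(πl)/2) · e^{1/6 - 1/25}, where the sum is over nonnegative integers k1, k2 with k1 + k2 = l. -/

import Mathlib

open Real
open Finset Nat Filter Stirling Topology

lemma even_choose_sum (l : ℕ) (hl : 1 ≤ l) :
    ∑ k ∈ range (l + 1), (2 * l).choose (2 * k) = 2 ^ (2 * l - 1) := by
  have key : (2 : ℤ) * ∑ k ∈ range (l + 1), ((2 * l).choose (2 * k) : ℤ) = 2 ^ (2 * l) := by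
    have h1 : ∑ i ∈ range (2 * l + 1), ((-1 : ℤ) ^ i + 1) * (2 * l).choose i = 2 ^ (2 * l) := by
      rw [show (fun i => ((-1 : ℤ) ^ i + 1) * (2 * l).choose i)
          = (fun i => (-1 : ℤ) ^ i * (2 * l).choose i + (2 * l).choose i) from by
            funext i; ring]
      rw [sum_add_distrib, Int.alternating_sum_range_choose_of_ne (by omega), zero_add]
      norm_cast
      exact Nat.sum_range_choose (2 * l)
    have h2 : ∑ i ∈ (range (2 * l + 1)).filter (fun i => Even i),
        ((-1 : ℤ) ^ i + 1) * (2 * l).choose i = 2 ^ (2 * l) := by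
      rw [← h1]
      refine sum_filter_of_ne fun i _ h => ?_
      by_contra hodd
      rw [Nat.not_even_iff_odd] at hodd
      rw [Odd.neg_one_pow hodd] at h
      simp at h
    rw [mul_sum, ← h2, eq_comm]
    refine sum_nbij' (i := fun i => i / 2) (j := fun k => 2 * k) ?_ ?_ ?_ ?_ ?_
    · intro i hi
      simp only [mem_filter, mem_range] at hi
      simp only [mem_range]
      omega
    · intro k hk
      simp only [mem_range] at hk
      simp only [mem_filter, mem_range]
      exact ⟨by omega, even_two_mul k⟩
    · intro i hi
      simp only [mem_filter, mem_range] at hi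
      obtain ⟨_, j, hj⟩ := hi
      omega
    · intro k _
      omega
    · intro i hi
      simp only [mem_filter, mem_range] at hi
      obtain ⟨hi1, hev⟩ := hi
      rw [Even.neg_one_pow hev, Nat.two_mul_div_two_of_even hev]
      ring
  have : ((∑ k ∈ range (l + 1), (2 * l).choose (2 * k) : ℕ) : ℤ) = ((2 ^ (2 * l - 1) : ℕ) : ℤ) := by
    push_cast
    have h2l : (2:ℤ) ^ (2 * l) = 2 * 2 ^ (2 * l - 1) := by
      rw [← _root_.pow_succ']; congr 1; omega
    rw [h2l] at key
    linarith
  exact_mod_cast this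

lemma step_upper (n : ℕ) :
    Real.log (stirlingSeq (n + 1)) - Real.log (stirlingSeq (n + 2)) ≤
      1 / (12 * ((n : ℝ) + 1)) - 1 / (12 * ((n : ℝ) + 2)) := by
  set t2 : ℝ := ((1 : ℝ) / (2 * ↑(n + 1) + 1)) ^ 2 with ht2
  have h_nonneg : (0 : ℝ) ≤ t2 := sq_nonneg _
  have ht2lt : t2 < 1 := by
    rw [ht2, one_div, inv_pow]
    exact inv_lt_one_of_one_lt₀
      (one_lt_pow₀ (by push_cast; nlinarith [Nat.cast_nonneg (α := ℝ) n]) two_ne_zero)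
  have g : HasSum (fun k : ℕ => (1 / 3 : ℝ) * t2 ^ (k + 1)) (1 / 3 * t2 * (1 - t2)⁻¹) := by
    have h := (hasSum_geometric_of_lt_one h_nonneg ht2lt).mul_left ((1 / 3 : ℝ) * t2)
    have hf : (fun k : ℕ => (1 / 3 : ℝ) * t2 ^ (k + 1)) = fun i => 1 / 3 * t2 * t2 ^ i := by
      funext k; rw [pow_succ]; ring
    rw [hf]; exact h
  have hle : Real.log (stirlingSeq (n + 1)) - Real.log (stirlingSeq (n + 2)) ≤
      1 / 3 * t2 * (1 - t2)⁻¹ := by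
    refine hasSum_le (fun k => ?_) (log_stirlingSeq_diff_hasSum n) g
    have hk : (1 : ℝ) / (2 * ↑(k + 1) + 1) ≤ 1 / 3 := by
      rw [div_le_div_iff₀ (by positivity) (by norm_num)]
      push_cast; nlinarith [Nat.cast_nonneg (α := ℝ) k]
    exact mul_le_mul_of_nonneg_right hk (pow_nonneg h_nonneg _)
  refine hle.trans (le_of_eq ?_)
  have hx : (0:ℝ) ≤ (n:ℝ) := Nat.cast_nonneg n
  have h2 : ((2 * ((n : ℝ) + 1) + 1) ^ 2 - 1) ≠ 0 := by nlinarith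
  have h3 : (2 * ((n : ℝ) + 1) + 1) ≠ 0 := by positivity
  have h4 : (1:ℝ) - t2 ≠ 0 := by linarith [ht2lt]
  rw [ht2]
  push_cast
  rw [div_pow, one_pow]
  field_simp
  ring

lemma step_lower (n : ℕ) :
    1 / (12 * ((n : ℝ) + 1) + 1) - 1 / (12 * ((n : ℝ) + 2) + 1) ≤
      Real.log (stirlingSeq (n + 1)) - Real.log (stirlingSeq (n + 2)) := by
  have h0 := le_hasSum (log_stirlingSeq_diff_hasSum n) 0 fun k _ => by positivity
  refine le_trans ?_ h0
  have hx : (0:ℝ) ≤ (n:ℝ) := Nat.cast_nonneg n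
  push_cast at h0 ⊢
  rw [pow_one, div_pow, one_pow]
  set A : ℝ := 12 * ((n:ℝ) + 1) + 1 with hA
  set B : ℝ := 12 * ((n:ℝ) + 2) + 1 with hB
  set C : ℝ := (2 * ((n:ℝ) + 1) + 1) ^ 2 with hC
  have hApos : 0 < A := by rw [hA]; positivity
  have hBpos : 0 < B := by rw [hB]; positivity
  have hCpos : 0 < C := by rw [hC]; positivity
  have e1 : 1 / A - 1 / B = (B - A) / (A * B) := by field_simp
  have e2 : 1 / (2 * (1:ℝ) + 1) * (1 / C) = 1 / (3 * C) := by
    field_simp; norm_num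
  rw [e1, e2, div_le_div_iff₀ (by positivity) (by positivity)]
  rw [hA, hB, hC]
  nlinarith

lemma tel_upper (n : ℕ) : ∀ m : ℕ,
    Real.log (stirlingSeq (n + 1)) - Real.log (stirlingSeq (n + 1 + m)) ≤
      1 / (12 * ((n : ℝ) + 1)) - 1 / (12 * ((n : ℝ) + 1 + m)) := by
  intro m
  induction m with
  | zero => simp
  | succ m ih =>
      have h2 := step_upper (n + m)
      have hidx : n + 1 + (m + 1) = (n + m) + 2 := by omega
      have hidx2 : n + 1 + m = (n + m) + 1 := by omega
      rw [hidx]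
      rw [hidx2] at ih
      push_cast at ih h2 ⊢
      ring_nf at ih h2 ⊢
      linarith

lemma tel_lower (n : ℕ) : ∀ m : ℕ,
    1 / (12 * ((n : ℝ) + 1) + 1) - 1 / (12 * ((n : ℝ) + 1 + m) + 1) ≤
      Real.log (stirlingSeq (n + 1)) - Real.log (stirlingSeq (n + 1 + m)) := by
  intro m
  induction m with
  | zero => simp
  | succ m ih =>
      have h2 := step_lower (n + m)
      have hidx : n + 1 + (m + 1) = (n + m) + 2 := by omega
      have hidx2 : n + 1 + m = (n + m) + 1 := by omega
      rw [hidx]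
      rw [hidx2] at ih
      push_cast at ih h2 ⊢
      ring_nf at ih h2 ⊢
      linarith

lemma tendsto_log_stirling (n : ℕ) :
    Filter.Tendsto (fun m : ℕ => Real.log (stirlingSeq (n + 1 + m))) Filter.atTop
      (nhds (Real.log (Real.sqrt π))) := by
  have h1 : Filter.Tendsto (fun m : ℕ => n + 1 + m) Filter.atTop Filter.atTop := by
    refine (tendsto_add_atTop_nat (n + 1)).congr fun m => ?_
    omega
  have h2 : Filter.Tendsto (fun m : ℕ => stirlingSeq (n + 1 + m)) Filter.atTop
      (nhds (Real.sqrt π)) := Stirling.tendsto_stirlingSeq_sqrt_pi.comp h1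
  exact ((Real.continuousAt_log (by positivity)).tendsto.comp h2)

lemma tendsto_aux (n c : ℕ) (d : ℝ) :
    Filter.Tendsto (fun m : ℕ => 1 / (12 * ((n : ℝ) + 1 + m) + d)) Filter.atTop (nhds 0) := by
  have h : Filter.Tendsto (fun m : ℕ => 12 * ((n : ℝ) + 1 + m) + d) Filter.atTop Filter.atTop := by
    apply Filter.tendsto_atTop_add_const_right
    have : Filter.Tendsto (fun m : ℕ => (m : ℝ)) Filter.atTop Filter.atTop :=
      tendsto_natCast_atTop_atTop
    have h12 : Filter.Tendsto (fun m : ℕ => 12 * (m : ℝ)) Filter.atTop Filter.atTop :=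
      this.const_mul_atTop (by norm_num)
    have := Filter.tendsto_atTop_add_const_left Filter.atTop (12 * ((n : ℝ) + 1)) h12
    refine this.congr fun m => by ring
  have h' := h.inv_tendsto_atTop
  simp only [one_div]
  exact h'

lemma log_stirling_upper (n : ℕ) :
    Real.log (stirlingSeq (n + 1)) ≤ Real.log (Real.sqrt π) + 1 / (12 * ((n : ℝ) + 1)) := by
  have key : ∀ m : ℕ, Real.log (stirlingSeq (n + 1)) ≤
      Real.log (stirlingSeq (n + 1 + m)) + 1 / (12 * ((n : ℝ) + 1)) - 1 / (12 * ((n : ℝ) + 1 + m)) := by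
    intro m; linarith [tel_upper n m]
  have hT : Filter.Tendsto (fun m : ℕ => Real.log (stirlingSeq (n + 1 + m))
      + 1 / (12 * ((n : ℝ) + 1)) - 1 / (12 * ((n : ℝ) + 1 + m))) Filter.atTop
      (nhds (Real.log (Real.sqrt π) + 1 / (12 * ((n : ℝ) + 1)))) := by
    have := ((tendsto_log_stirling n).add_const (1 / (12 * ((n : ℝ) + 1)))).sub (tendsto_aux n 0 0)
    simpa using this
  exact ge_of_tendsto' hT key

lemma log_stirling_lower (n : ℕ) :
    Real.log (Real.sqrt π) + 1 / (12 * ((n : ℝ) + 1) + 1) ≤ Real.log (stirlingSeq (n + 1)) := by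
  have key : ∀ m : ℕ, Real.log (stirlingSeq (n + 1 + m))
      + 1 / (12 * ((n : ℝ) + 1) + 1) - 1 / (12 * ((n : ℝ) + 1 + m) + 1)
      ≤ Real.log (stirlingSeq (n + 1)) := by
    intro m; linarith [tel_lower n m]
  have hT : Filter.Tendsto (fun m : ℕ => Real.log (stirlingSeq (n + 1 + m))
      + 1 / (12 * ((n : ℝ) + 1) + 1) - 1 / (12 * ((n : ℝ) + 1 + m) + 1)) Filter.atTop
      (nhds (Real.log (Real.sqrt π) + 1 / (12 * ((n : ℝ) + 1) + 1))) := by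
    have := ((tendsto_log_stirling n).add_const (1 / (12 * ((n : ℝ) + 1) + 1))).sub
      (tendsto_aux n 0 1)
    simpa using this
  exact le_of_tendsto' hT key

lemma ratio_eq (n : ℕ) :
    (((n+1).factorial : ℝ))^2 * 2^(2*n+1) / ((2*(n+1)).factorial : ℝ)
      = (stirlingSeq (n+1))^2 / stirlingSeq (2*(n+1)) * Real.sqrt ((n:ℝ)+1) / 2 := by
  set L : ℝ := (n:ℝ) + 1 with hLdef
  have hL : 0 < L := by positivity
  set a : ℝ := Real.sqrt L with hadef
  have ha : 0 < a := Real.sqrt_pos.mpr hL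
  have ha2 : a^2 = L := Real.sq_sqrt hL.le
  set E : ℝ := (L / Real.exp 1)^(n+1) with hEdef
  have hE : 0 < E := by positivity
  set F : ℝ := ((n+1).factorial : ℝ) with hFdef
  set G : ℝ := ((2*(n+1)).factorial : ℝ) with hGdef
  have hG : 0 < G := by positivity
  have hcast : ((n+1 : ℕ) : ℝ) = L := by push_cast [hLdef]; ring
  have hcast2 : ((2*(n+1) : ℕ) : ℝ) = 2*L := by push_cast [hLdef]; ring
  have hx : stirlingSeq (n+1) = F / (Real.sqrt (2*L) * E) := by
    rw [stirlingSeq, hcast, hFdef, hEdef]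
  have hx2 : (stirlingSeq (n+1))^2 = F^2 / (2*L*E^2) := by
    rw [hx, div_pow, mul_pow, Real.sq_sqrt (by positivity)]
  have hy : stirlingSeq (2*(n+1)) = G / (2*a*(2^(2*(n+1)) * E^2)) := by
    rw [stirlingSeq, hcast2, hGdef]
    congr 1
    have h1 : Real.sqrt (2*(2*L)) = 2*a := by
      rw [show (2:ℝ)*(2*L) = 2^2 * L by ring, Real.sqrt_mul (by positivity), hadef,
        Real.sqrt_sq (by norm_num)]
    have h2 : (2*L/Real.exp 1)^(2*(n+1)) = 2^(2*(n+1)) * E^2 := by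
      rw [show (2*L/Real.exp 1) = 2 * (L/Real.exp 1) by ring, mul_pow, hEdef, ← pow_mul,
        show (n+1)*2 = 2*(n+1) by ring]
    rw [h1, h2]
  rw [hx2, hy]
  have hE2 : E^2 ≠ 0 := by positivity
  field_simp
  rw [← ha2]
  ring

lemma sum_eq (n : ℕ) :
    ∑ p ∈ Finset.HasAntidiagonal.antidiagonal (n+1),
        (((n+1).factorial : ℝ))^2 / (((2*p.1).factorial : ℝ) * ((2*p.2).factorial : ℝ))
      = (((n+1).factorial : ℝ))^2 * 2^(2*n+1) / ((2*(n+1)).factorial : ℝ) := by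
  have h1 : ∀ p ∈ Finset.HasAntidiagonal.antidiagonal (n+1),
      (((n+1).factorial : ℝ))^2 / (((2*p.1).factorial : ℝ) * ((2*p.2).factorial : ℝ))
        = (((n+1).factorial : ℝ))^2 / ((2*(n+1)).factorial : ℝ)
          * ((2*(n+1)).choose (2*p.1) : ℝ) := by
    rintro ⟨k1, k2⟩ hp
    rw [Finset.HasAntidiagonal.mem_antidiagonal] at hp
    simp only
    have hk1 : 2*k1 ≤ 2*(n+1) := by omega
    have hfac : ((2*(n+1)).choose (2*k1)) * (2*k1).factorial * (2*k2).factorial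
        = (2*(n+1)).factorial := by
      have := Nat.choose_mul_factorial_mul_factorial hk1
      rwa [show 2*(n+1) - 2*k1 = 2*k2 by omega] at this
    have hcast : (((2*(n+1)).factorial : ℕ) : ℝ)
        = ((2*(n+1)).choose (2*k1) : ℝ) * ((2*k1).factorial : ℝ) * ((2*k2).factorial : ℝ) := by
      rw [← hfac]; push_cast; ring
    rw [hcast]
    have h1 : ((2*k1).factorial : ℝ) ≠ 0 := by positivity
    have h2 : ((2*k2).factorial : ℝ) ≠ 0 := by positivity
    have h3 : ((2*(n+1)).choose (2*k1) : ℝ) ≠ 0 := by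
      exact_mod_cast Nat.cast_ne_zero.mpr (Nat.choose_pos hk1).ne'
    field_simp
  rw [Finset.sum_congr rfl h1, ← Finset.mul_sum]
  have h2 : ∑ p ∈ Finset.HasAntidiagonal.antidiagonal (n+1), ((2*(n+1)).choose (2*p.1) : ℝ)
      = ((2:ℝ))^(2*n+1) := by
    have hnat : ∑ p ∈ Finset.HasAntidiagonal.antidiagonal (n+1), (2*(n+1)).choose (2*p.1) = 2^(2*n+1) := by
      rw [Finset.Nat.sum_antidiagonal_eq_sum_range_succ_mk]
      have := even_choose_sum (n+1) (by omega)
      rwa [show 2*(n+1)-1 = 2*n+1 by omega] at this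
    calc ∑ p ∈ Finset.HasAntidiagonal.antidiagonal (n+1), ((2*(n+1)).choose (2*p.1) : ℝ)
        = ((∑ p ∈ Finset.HasAntidiagonal.antidiagonal (n+1), (2*(n+1)).choose (2*p.1) : ℕ) : ℝ) := by
          rw [Nat.cast_sum]
      _ = ((2:ℝ))^(2*n+1) := by rw [hnat]; push_cast; ring
  rw [h2]
  ring


/-- For every integer `l ≥ 1`,
`√(πl)/2 ≤ ∑_{k1+k2=l} (l!)²/((2k1)!(2k2)!) ≤ (√(πl)/2) e^{1/6 - 1/25}`. -/
theorem sum_sq_factorial_ratio_bounds (l : ℕ) (hl : 1 ≤ l) :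
    Real.sqrt (π * l) / 2
        ≤ ∑ p ∈ Finset.HasAntidiagonal.antidiagonal l,
            (l.factorial : ℝ) ^ 2 / (((2 * p.1).factorial : ℝ) * ((2 * p.2).factorial : ℝ)) ∧
      ∑ p ∈ Finset.HasAntidiagonal.antidiagonal l,
            (l.factorial : ℝ) ^ 2 / (((2 * p.1).factorial : ℝ) * ((2 * p.2).factorial : ℝ))
        ≤ Real.sqrt (π * l) / 2 * Real.exp (1 / 6 - 1 / 25) := by
  obtain ⟨n, rfl⟩ : ∃ n, l = n + 1 := ⟨l - 1, by omega⟩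
  clear hl
  set L : ℝ := (n : ℝ) + 1 with hLdef
  have hL : 0 < L := by positivity
  have hL1 : (1 : ℝ) ≤ L := by rw [hLdef]; nlinarith [Nat.cast_nonneg (α := ℝ) n]
  set a : ℝ := Real.sqrt L with hadef
  have ha : 0 < a := Real.sqrt_pos.mpr hL
  set x : ℝ := stirlingSeq (n + 1) with hxdef
  have hx0 : 0 < x := stirlingSeq'_pos n
  have hy0' : 0 < stirlingSeq ((2 * n + 1) + 1) := stirlingSeq'_pos (2 * n + 1)
  have hidx : (2 * n + 1) + 1 = 2 * (n + 1) := by ring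
  set y : ℝ := stirlingSeq (2 * (n + 1)) with hydef
  have hy0 : 0 < y := by rw [hydef, ← hidx]; exact hy0'
  have hπ : (0 : ℝ) < Real.sqrt π := Real.sqrt_pos.mpr pi_pos
  -- log bounds
  have hlogx_lo : Real.log (Real.sqrt π) ≤ Real.log x := by
    have h := log_stirling_lower n
    have hpos : (0 : ℝ) < 1 / (12 * ((n : ℝ) + 1) + 1) := by positivity
    rw [← hxdef] at h
    linarith
  have hlogx_up : Real.log x ≤ Real.log (Real.sqrt π) + 1 / (12 * L) := by
    have h := log_stirling_upper n
    rw [← hxdef] at h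
    rw [hLdef]
    exact h
  have hlogy_lo : Real.log (Real.sqrt π) + 1 / (24 * L + 1) ≤ Real.log y := by
    have h := log_stirling_lower (2 * n + 1)
    rw [hidx, ← hydef] at h
    have he : 12 * ((↑(2 * n + 1) : ℝ) + 1) + 1 = 24 * L + 1 := by
      push_cast [hLdef]; ring
    rw [he] at h
    exact h
  have hlogy_le : Real.log y ≤ Real.log x := by
    have h := log_stirlingSeq'_antitone (show n ≤ 2 * n + 1 by omega)
    simp only [Function.comp] at h
    rw [Nat.succ_eq_add_one, Nat.succ_eq_add_one, hidx, ← hydef, ← hxdef] at h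
    exact h
  -- key elementary inequality
  have hkey : 1 / (6 * L) - 1 / (24 * L + 1) ≤ 1 / 6 - 1 / 25 := by
    have e : 1 / (6 * L) - 1 / (24 * L + 1) = (18 * L + 1) / ((6 * L) * (24 * L + 1)) := by
      field_simp; ring
    rw [e, div_le_iff₀ (by positivity)]
    nlinarith [mul_nonneg (sub_nonneg.mpr hL1) (show (0:ℝ) ≤ 456 * L + 25 by positivity)]
  -- bounds on x^2 / y
  have hlo : Real.sqrt π ≤ x ^ 2 / y := by
    have hlog : Real.log (Real.sqrt π) ≤ Real.log (x ^ 2 / y) := by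
      rw [Real.log_div (by positivity) hy0.ne', Real.log_pow]
      push_cast
      linarith
    exact (Real.log_le_log_iff hπ (by positivity)).mp hlog
  have h612 : 1 / (12 * L) + 1 / (12 * L) = 1 / (6 * L) := by
    rw [div_add_div _ _ (by positivity) (by positivity)]
    rw [div_eq_div_iff (by positivity) (by positivity)]
    ring
  have hup : x ^ 2 / y ≤ Real.sqrt π * Real.exp (1 / 6 - 1 / 25) := by
    have hlog : Real.log (x ^ 2 / y) ≤ Real.log (Real.sqrt π * Real.exp (1 / 6 - 1 / 25)) := by
      rw [Real.log_div (by positivity) hy0.ne', Real.log_pow,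
        Real.log_mul hπ.ne' (Real.exp_ne_zero _), Real.log_exp]
      push_cast
      linarith
    exact (Real.log_le_log_iff (by positivity) (by positivity)).mp hlog
  -- rewrite the sum
  have hsum : ∑ p ∈ Finset.HasAntidiagonal.antidiagonal (n + 1),
      ((n + 1).factorial : ℝ) ^ 2 / (((2 * p.1).factorial : ℝ) * ((2 * p.2).factorial : ℝ))
      = x ^ 2 / y * a / 2 := by
    rw [sum_eq n, ratio_eq n]
  have hsqrt : Real.sqrt (π * ((n + 1 : ℕ) : ℝ)) = Real.sqrt π * a := by
    rw [hadef, hLdef]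
    push_cast
    exact Real.sqrt_mul pi_pos.le _
  rw [hsum, hsqrt]
  constructor
  · have := mul_le_mul_of_nonneg_right hlo ha.le
    linarith
  · have := mul_le_mul_of_nonneg_right hup ha.le
    nlinarith
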